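/- Let L_a, L_b, L_c be Lagrangians in (ℝ^{2n}, ω) and let (e_a, f_a), (e_b, f_b), (e_c, f_c) be symplectic bases such that L_a = Span(e_c) = Span(f_b) = Span(e_a + f_a), L_b = Span(e_a) = Span(f_c) = Span(e_b + f_b), and L_c = Span(e_b) = Span(f_a) = Span(e_c + f_c). Let A, B, C be the unique n×n matrices defined by f_b = −e_c·A, f_c = −e_a·B, f_a = −e_b·C. Then A, B, C are orthogonal matrices, C·B·A = −Id, and furthermore e_b = (e_c + f_c)·A, e_c = (e_a + f_a)·B, and e_a = (e_b + f_b)·C. -/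

import Mathlib

open Matrix

noncomputable section

/-- The symplectic vector space `ℝ^{2n}`, with coordinates indexed by `Fin n ⊕ Fin n`. -/
abbrev V2 (n : ℕ) : Type := (Fin n ⊕ Fin n) → ℝ

/-- The standard matrix `J = [[0, Id],[−Id, 0]]`. -/
def Jn (n : ℕ) : Matrix (Fin n ⊕ Fin n) (Fin n ⊕ Fin n) ℝ :=
  Matrix.fromBlocks 0 1 (-1) 0

/-- The standard symplectic form `ω(x,y) = ᵀx J y` on `ℝ^{2n}`. -/
def omegaForm (n : ℕ) (x y : V2 n) : ℝ := x ⬝ᵥ (Jn n).mulVec y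

/-- A subspace is Lagrangian if it has dimension `n` and `ω` vanishes on it. -/
def IsLagrangian (n : ℕ) (L : Submodule ℝ (V2 n)) : Prop :=
  Module.finrank ℝ L = n ∧ ∀ x ∈ L, ∀ y ∈ L, omegaForm n x y = 0

/-- Membership in `Sp(2n,ℝ)`: `ᵀg J g = J`. -/
def IsSymplectic (n : ℕ) (g : Matrix (Fin n ⊕ Fin n) (Fin n ⊕ Fin n) ℝ) : Prop :=
  gᵀ * Jn n * g = Jn n

/-- `φ : L → L'` is the map whose graph is `M`, i.e. `M = {e + φ e : e ∈ L}`. -/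
def IsGraphMap (n : ℕ) (L M L' : Submodule ℝ (V2 n)) (φ : L →ₗ[ℝ] L') : Prop :=
  ∀ x : V2 n, x ∈ M ↔ ∃ e : L, x = (e : V2 n) + (φ e : V2 n)

/-- `tmul v g` is the tuple `v·g`, with `(v·g)_j = Σ_i g_{ij} • v_i`. -/
def tmul (n : ℕ) (v : Fin n → V2 n) (g : Matrix (Fin n) (Fin n) ℝ) : Fin n → V2 n :=
  fun j => ∑ i, g i j • v i

/-- A symplectic basis of `ℝ^{2n}`: a pair of `n`-tuples forming a basis, with
`ω(e_i,e_j) = ω(f_i,f_j) = 0` and `ω(e_i,f_j) = δ_{ij}`. -/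
def IsSymplecticBasis (n : ℕ) (e f : Fin n → V2 n) : Prop :=
  (∀ i j, omegaForm n (e i) (e j) = 0) ∧ (∀ i j, omegaForm n (f i) (f j) = 0) ∧
  (∀ i j, omegaForm n (e i) (f j) = if i = j then 1 else 0) ∧
  LinearIndependent ℝ (Sum.elim e f) ∧
  Submodule.span ℝ (Set.range (Sum.elim e f)) = ⊤

namespace TripleAux

def omegaLin (n : ℕ) (x : V2 n) : V2 n →ₗ[ℝ] ℝ where
  toFun y := omegaForm n x y
  map_add' y z := by simp [omegaForm, Matrix.mulVec_add, dotProduct_add]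
  map_smul' c y := by simp [omegaForm, Matrix.mulVec_smul, dotProduct_smul]

lemma omega_add_right (n : ℕ) (x y z : V2 n) :
    omegaForm n x (y + z) = omegaForm n x y + omegaForm n x z :=
  map_add (omegaLin n x) y z

lemma omega_neg_right (n : ℕ) (x y : V2 n) :
    omegaForm n x (-y) = -omegaForm n x y :=
  map_neg (omegaLin n x) y

lemma omega_sum_smul (n : ℕ) (x : V2 n) (c : Fin n → ℝ) (v : Fin n → V2 n) :
    omegaForm n x (∑ i, c i • v i) = ∑ i, c i * omegaForm n x (v i) := by
  have h : omegaForm n x (∑ i, c i • v i) = omegaLin n x (∑ i, c i • v i) := rfl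
  rw [h, map_sum]
  simp [omegaLin]
  rfl

lemma Jn_transpose (n : ℕ) : (Jn n)ᵀ = -(Jn n) := by
  simp [Jn, Matrix.fromBlocks_transpose]
  ext i j
  cases i <;> cases j <;> simp [Matrix.fromBlocks]

lemma omega_skew (n : ℕ) (x y : V2 n) : omegaForm n x y = - omegaForm n y x := by
  unfold omegaForm
  rw [Matrix.dotProduct_mulVec, dotProduct_comm, ← Matrix.mulVec_transpose, Jn_transpose,
    Matrix.neg_mulVec, dotProduct_neg]

def gram (n : ℕ) (u v : Fin n → V2 n) : Matrix (Fin n) (Fin n) ℝ :=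
  Matrix.of fun i j => omegaForm n (u i) (v j)

lemma gram_apply (n : ℕ) (u v : Fin n → V2 n) (i j : Fin n) :
    gram n u v i j = omegaForm n (u i) (v j) := rfl

lemma gram_tmul (n : ℕ) (u v : Fin n → V2 n) (g : Matrix (Fin n) (Fin n) ℝ) :
    gram n u (tmul n v g) = gram n u v * g := by
  ext i j
  rw [gram_apply, Matrix.mul_apply]
  show omegaForm n (u i) (∑ k, g k j • v k) = _
  rw [omega_sum_smul]
  exact Finset.sum_congr rfl fun k _ => mul_comm _ _

lemma gram_add (n : ℕ) (u v w : Fin n → V2 n) :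
    gram n u (v + w) = gram n u v + gram n u w := by
  ext i j
  simp [gram_apply, gram, omega_add_right]

lemma gram_neg (n : ℕ) (u v : Fin n → V2 n) :
    gram n u (-v) = -gram n u v := by
  ext i j
  simp [gram_apply, gram, omega_neg_right]

lemma gram_skew (n : ℕ) (u v : Fin n → V2 n) :
    gram n u v = -(gram n v u)ᵀ := by
  ext i j
  simp [gram_apply, gram]
  exact omega_skew n (u i) (v j)

lemma gram_zero (n : ℕ) (L : Submodule ℝ (V2 n))
    (hL : ∀ x ∈ L, ∀ y ∈ L, omegaForm n x y = 0)
    (u v : Fin n → V2 n) (hu : ∀ i, u i ∈ L) (hv : ∀ j, v j ∈ L) :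
    gram n u v = 0 := by
  ext i j
  simpa [gram] using hL _ (hu i) _ (hv j)

lemma repr_lemma (n : ℕ) (e f : Fin n → V2 n)
    (hef : ∀ i j, omegaForm n (e i) (f j) = if i = j then 1 else 0)
    (v : V2 n) (hv : v ∈ Submodule.span ℝ (Set.range f)) :
    v = ∑ i, omegaForm n (e i) v • f i := by
  obtain ⟨c, hc⟩ := (Submodule.mem_span_range_iff_exists_fun ℝ).mp hv
  have key : ∀ k, omegaForm n (e k) v = c k := by
    intro k
    rw [← hc, omega_sum_smul]
    simp [hef]
  rw [← hc]
  exact Finset.sum_congr rfl fun i _ => by rw [hc, key]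

lemma ortho_aux {n : ℕ} (P Q R A B : Matrix (Fin n) (Fin n) ℝ)
    (hPB : P * B = -1) (hRA : R * A = -1)
    (h5 : Q = -(Pᵀ * A)) (h6 : R = -(Qᵀ * B)) : Aᵀ * A = 1 := by
  have hQBA : Qᵀ * (B * A) = 1 := by
    rw [h6, neg_mul, mul_assoc] at hRA
    exact neg_inj.mp hRA
  have hQt : Qᵀ = -(Aᵀ * P) := by
    rw [h5, transpose_neg, transpose_mul, transpose_transpose]
  rw [hQt, neg_mul] at hQBA
  have h : Aᵀ * P * (B * A) = -(Aᵀ * A) := by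
    rw [← mul_assoc, mul_assoc Aᵀ P B, hPB, Matrix.mul_neg, Matrix.mul_one,
      Matrix.neg_mul]
  rw [h, neg_neg] at hQBA
  exact hQBA

lemma tuple_aux (n : ℕ) (e2 f2 e3 f3 : Fin n → V2 n) (A : Matrix (Fin n) (Fin n) ℝ)
    (hspan : ∀ j, e2 j + f2 j ∈ Submodule.span ℝ (Set.range f3))
    (hpair : ∀ i j, omegaForm n (e3 i) (f3 j) = if i = j then 1 else 0)
    (hgA : gram n e3 e2 = A) (hg0 : gram n e3 f2 = 0)
    (htm : f2 = -(tmul n e3 A)) :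
    e2 = tmul n (e3 + f3) A := by
  funext j
  have hrep := repr_lemma n e3 f3 hpair _ (hspan j)
  have hco : ∀ i, omegaForm n (e3 i) (e2 j + f2 j) = A i j := by
    intro i
    rw [omega_add_right]
    have h1 : omegaForm n (e3 i) (e2 j) = A i j := by rw [← hgA]; rfl
    have h2 : omegaForm n (e3 i) (f2 j) = 0 := by
      have := congrFun (congrFun hg0 i) j
      simpa [gram] using this
    rw [h1, h2, add_zero]
  have hsplit : tmul n (e3 + f3) A j = tmul n e3 A j + tmul n f3 A j := by
    simp [tmul, smul_add, Finset.sum_add_distrib]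
  have h3 : tmul n e3 A j = -(f2 j) := by
    rw [htm]; simp
  have h4 : tmul n f3 A j = e2 j + f2 j := by
    rw [hrep]
    exact (Finset.sum_congr rfl fun i _ => by rw [hco]).symm
  rw [hsplit, h3, h4]
  abel

end TripleAux

theorem triple_of_lagrangians_matrices (n : ℕ)
    (La Lb Lc : Submodule ℝ (V2 n))
    (hLa : IsLagrangian n La) (hLb : IsLagrangian n Lb) (hLc : IsLagrangian n Lc)
    (ea fa eb fb ec fc : Fin n → V2 n)
    (ha : IsSymplecticBasis n ea fa) (hb : IsSymplecticBasis n eb fb)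
    (hc : IsSymplecticBasis n ec fc)
    (hLa1 : La = Submodule.span ℝ (Set.range ec))
    (hLa2 : La = Submodule.span ℝ (Set.range fb))
    (hLa3 : La = Submodule.span ℝ (Set.range (ea + fa)))
    (hLb1 : Lb = Submodule.span ℝ (Set.range ea))
    (hLb2 : Lb = Submodule.span ℝ (Set.range fc))
    (hLb3 : Lb = Submodule.span ℝ (Set.range (eb + fb)))
    (hLc1 : Lc = Submodule.span ℝ (Set.range eb))
    (hLc2 : Lc = Submodule.span ℝ (Set.range fa))
    (hLc3 : Lc = Submodule.span ℝ (Set.range (ec + fc)))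
    (A B C : Matrix (Fin n) (Fin n) ℝ)
    (hA : fb = -(tmul n ec A)) (hB : fc = -(tmul n ea B)) (hC : fa = -(tmul n eb C)) :
    Aᵀ * A = 1 ∧ Bᵀ * B = 1 ∧ Cᵀ * C = 1 ∧ C * B * A = -1 ∧
    eb = tmul n (ec + fc) A ∧ ec = tmul n (ea + fa) B ∧ ea = tmul n (eb + fb) C :=  by
  classical
  open TripleAux in
  have hec : ∀ i, ec i ∈ La := fun i => by
    rw [hLa1]; exact Submodule.subset_span (Set.mem_range_self i)
  have hfb : ∀ i, fb i ∈ La := fun i => by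
    rw [hLa2]; exact Submodule.subset_span (Set.mem_range_self i)
  have heafa : ∀ i, (ea + fa) i ∈ La := fun i => by
    rw [hLa3]; exact Submodule.subset_span (Set.mem_range_self i)
  have hea : ∀ i, ea i ∈ Lb := fun i => by
    rw [hLb1]; exact Submodule.subset_span (Set.mem_range_self i)
  have hfc : ∀ i, fc i ∈ Lb := fun i => by
    rw [hLb2]; exact Submodule.subset_span (Set.mem_range_self i)
  have hebfb : ∀ i, (eb + fb) i ∈ Lb := fun i => by
    rw [hLb3]; exact Submodule.subset_span (Set.mem_range_self i)
  have heb : ∀ i, eb i ∈ Lc := fun i => by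
    rw [hLc1]; exact Submodule.subset_span (Set.mem_range_self i)
  have hfa : ∀ i, fa i ∈ Lc := fun i => by
    rw [hLc2]; exact Submodule.subset_span (Set.mem_range_self i)
  have hecfc : ∀ i, (ec + fc) i ∈ Lc := fun i => by
    rw [hLc3]; exact Submodule.subset_span (Set.mem_range_self i)
  set P := gram n ec ea with hPdef
  set Q := gram n ea eb with hQdef
  set R := gram n eb ec with hRdef
  -- pairing gram matrices are the identity
  have hga : gram n ea fa = 1 := by
    ext i j; simp [TripleAux.gram, ha.2.2.1, Matrix.one_apply]
  have hgb : gram n eb fb = 1 := by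
    ext i j; simp [TripleAux.gram, hb.2.2.1, Matrix.one_apply]
  have hgc : gram n ec fc = 1 := by
    ext i j; simp [TripleAux.gram, hc.2.2.1, Matrix.one_apply]
  -- the three products
  have hPB : P * B = -1 := by
    have h1 := hgc
    rw [hB, gram_neg, gram_tmul] at h1
    exact neg_eq_iff_eq_neg.mp h1
  have hQC : Q * C = -1 := by
    have h1 := hga
    rw [hC, gram_neg, gram_tmul] at h1
    exact neg_eq_iff_eq_neg.mp h1
  have hRA : R * A = -1 := by
    have h1 := hgb
    rw [hA, gram_neg, gram_tmul] at h1
    exact neg_eq_iff_eq_neg.mp h1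
  -- the three linear relations from the Lagrangians
  have h4 : P = -(Rᵀ * C) := by
    have hz : gram n ec (ea + fa) = 0 :=
      gram_zero n La hLa.2 ec (ea + fa) hec heafa
    rw [gram_add, hC, gram_neg, gram_tmul, gram_skew n ec eb, ← hRdef,
      Matrix.neg_mul, neg_neg] at hz
    exact eq_neg_of_add_eq_zero_left hz
  have h5 : Q = -(Pᵀ * A) := by
    have hz : gram n ea (eb + fb) = 0 :=
      gram_zero n Lb hLb.2 ea (eb + fb) hea hebfb
    rw [gram_add, hA, gram_neg, gram_tmul, gram_skew n ea ec, ← hPdef,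
      Matrix.neg_mul, neg_neg] at hz
    exact eq_neg_of_add_eq_zero_left hz
  have h6 : R = -(Qᵀ * B) := by
    have hz : gram n eb (ec + fc) = 0 :=
      gram_zero n Lc hLc.2 eb (ec + fc) heb hecfc
    rw [gram_add, hB, gram_neg, gram_tmul, gram_skew n eb ea, ← hQdef,
      Matrix.neg_mul, neg_neg] at hz
    exact eq_neg_of_add_eq_zero_left hz
  -- orthogonality
  have hAtA : Aᵀ * A = 1 := ortho_aux P Q R A B hPB hRA h5 h6
  have hBtB : Bᵀ * B = 1 := ortho_aux Q R P B C hQC hPB h6 h4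
  have hCtC : Cᵀ * C = 1 := ortho_aux R P Q C A hRA hQC h4 h5
  have hAAt : A * Aᵀ = 1 := mul_eq_one_comm.mp hAtA
  have hBBt : B * Bᵀ = 1 := mul_eq_one_comm.mp hBtB
  have hCCt : C * Cᵀ = 1 := mul_eq_one_comm.mp hCtC
  -- P = -Bᵀ, Q = -Cᵀ, R = -Aᵀ
  have hPval : P = -Bᵀ := by
    calc P = P * (B * Bᵀ) := by rw [hBBt, Matrix.mul_one]
    _ = (P * B) * Bᵀ := by rw [mul_assoc]
    _ = -Bᵀ := by rw [hPB, Matrix.neg_mul, Matrix.one_mul]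
  have hQval : Q = -Cᵀ := by
    calc Q = Q * (C * Cᵀ) := by rw [hCCt, Matrix.mul_one]
    _ = (Q * C) * Cᵀ := by rw [mul_assoc]
    _ = -Cᵀ := by rw [hQC, Matrix.neg_mul, Matrix.one_mul]
  have hRval : R = -Aᵀ := by
    calc R = R * (A * Aᵀ) := by rw [hAAt, Matrix.mul_one]
    _ = (R * A) * Aᵀ := by rw [mul_assoc]
    _ = -Aᵀ := by rw [hRA, Matrix.neg_mul, Matrix.one_mul]
  -- C * B * A = -1
  have hCBA : C * B * A = -1 := by
    have h := hRA
    rw [h6, hQval, transpose_neg, transpose_transpose] at h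
    simpa [Matrix.neg_mul, neg_neg, Matrix.mul_assoc] using h
  -- gram identities for the tuple part
  have hgec_eb : gram n ec eb = A := by
    rw [gram_skew n ec eb, ← hRdef, hRval, transpose_neg, transpose_transpose, neg_neg]
  have hgea_ec : gram n ea ec = B := by
    rw [gram_skew n ea ec, ← hPdef, hPval, transpose_neg, transpose_transpose, neg_neg]
  have hgeb_ea : gram n eb ea = C := by
    rw [gram_skew n eb ea, ← hQdef, hQval, transpose_neg, transpose_transpose, neg_neg]
  refine ⟨hAtA, hBtB, hCtC, hCBA, ?_, ?_, ?_⟩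
  · exact tuple_aux n eb fb ec fc A
      (fun j => by
        have h := hebfb j
        rw [hLb2] at h
        simpa using h)
      hc.2.2.1 hgec_eb
      (gram_zero n La hLa.2 ec fb hec hfb) hA
  · exact tuple_aux n ec fc ea fa B
      (fun j => by
        have h := hecfc j
        rw [hLc2] at h
        simpa using h)
      ha.2.2.1 hgea_ec
      (gram_zero n Lb hLb.2 ea fc hea hfc) hB
  · exact tuple_aux n ea fa eb fb C
      (fun j => by
        have h := heafa j
        rw [hLa2] at h
        simpa using h)
      hb.2.2.1 hgeb_ea
      (gram_zero n Lc hLc.2 eb fa heb hfa) hC
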